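/- arXiv:0911.2345 — 3 statements merged into one kernel-verified Lean document; each statement's English description precedes it below -/
import Mathlib

section
/- If K₁ and K₂ are Cantor sets in ℝ with thicknesses satisfying τ(K₁)·τ(K₂) > 1, and the sets are interleaved (neither is contained in a gap of the other, nor in the unbounded complementary components of the other's convex hull), then K₁ ∩ K₂ ≠ ∅. -/
open Set

/-- The convex hull `I₀ = [inf K, sup K]` of a set `K ⊆ ℝ`. -/
noncomputable def cantorHull (K : Set ℝ) : Set ℝ := Set.Icc (sInf K) (sSup K)

/-- `U` is a gap of `K`: a (bounded) connected component of `I₀ \ K`. -/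
def IsGap (K U : Set ℝ) : Prop :=
  ∃ u ∈ cantorHull K \ K, U = connectedComponentIn (cantorHull K \ K) u

/-- A presentation of `K`: an injective enumeration `𝒰 : ℕ → Set ℝ` of all the gaps of `K`. -/
def IsPresentation (K : Set ℝ) (𝒰 : ℕ → Set ℝ) : Prop :=
  Function.Injective 𝒰 ∧ Set.range 𝒰 = {U | IsGap K U}

/-- The bridge at `u` relative to the gaps `𝒰 0, …, 𝒰 n`: the connected component of
`I₀ \ (𝒰 0 ∪ … ∪ 𝒰 n)` containing `u`. -/
noncomputable def bridge (K : Set ℝ) (𝒰 : ℕ → Set ℝ) (n : ℕ) (u : ℝ) : Set ℝ :=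
  connectedComponentIn (cantorHull K \ ⋃ i ∈ Finset.range (n + 1), 𝒰 i) u

/-- The Newhouse thickness of `K`: the sup over presentations `𝒰` of the inf over
boundary points `u` of gaps `𝒰 n` of the ratio `ℓ(bridge)/ℓ(gap)`. -/
noncomputable def thickness (K : Set ℝ) : ℝ :=
  ⨆ 𝒰 : {𝒰 : ℕ → Set ℝ // IsPresentation K 𝒰},
    ⨅ p : {p : ℕ × ℝ // p.2 ∈ frontier (𝒰.1 p.1)},
      Metric.diam (bridge K 𝒰.1 p.1.1 p.1.2) / Metric.diam (𝒰.1 p.1.1)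

/-- A Cantor set in the line: compact, perfect, totally disconnected and nonempty. -/
def IsCantorSet (K : Set ℝ) : Prop :=
  IsCompact K ∧ Perfect K ∧ IsTotallyDisconnected K ∧ K.Nonempty

/-- `K₁` and `K₂` are interleaved: neither is contained in a gap of the other,
nor in one of the two unbounded components of the complement of the other's convex hull. -/
def Interleaved (K₁ K₂ : Set ℝ) : Prop :=
  (¬ ∃ U, IsGap K₂ U ∧ K₁ ⊆ U) ∧ (¬ ∃ U, IsGap K₁ U ∧ K₂ ⊆ U) ∧
  ¬ (K₁ ⊆ {x | x < sInf K₂}) ∧ ¬ (K₁ ⊆ {x | sSup K₂ < x}) ∧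
  ¬ (K₂ ⊆ {x | x < sInf K₁}) ∧ ¬ (K₂ ⊆ {x | sSup K₁ < x})


open Metric

lemma hull_diff_open {K : Set ℝ} (hK : IsCompact K) (hne : K.Nonempty) :
    IsOpen (cantorHull K \ K) := by
  have h1 : sInf K ∈ K := hK.sInf_mem hne
  have h2 : sSup K ∈ K := hK.sSup_mem hne
  have : cantorHull K \ K = Ioo (sInf K) (sSup K) \ K := by
    ext x
    simp only [cantorHull, mem_diff, mem_Icc, mem_Ioo]
    constructor
    · rintro ⟨⟨ha, hb⟩, hx⟩
      exact ⟨⟨lt_of_le_of_ne ha (by rintro rfl; exact hx h1),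
        lt_of_le_of_ne hb (by rintro rfl; exact hx h2)⟩, hx⟩
    · rintro ⟨⟨ha, hb⟩, hx⟩; exact ⟨⟨ha.le, hb.le⟩, hx⟩
  rw [this]
  exact isOpen_Ioo.sdiff hK.isClosed

/-- a connected, open, nonempty, bounded subset of ℝ is `Ioo (sInf C) (sSup C)` -/
lemma open_conn_eq_Ioo {C : Set ℝ} (ho : IsOpen C) (hc : IsPreconnected C)
    (hne : C.Nonempty) (hbd : Bornology.IsBounded C) :
    C = Ioo (sInf C) (sSup C) ∧ sInf C < sSup C := by
  obtain ⟨u, hu⟩ := hne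
  have hbb : BddBelow C := hbd.bddBelow
  have hba : BddAbove C := hbd.bddAbove
  have hOC : C.OrdConnected := hc.ordConnected
  obtain ⟨ε, hε, hball⟩ := Metric.isOpen_iff.mp ho u hu
  have hu1 : u - ε/2 ∈ C := hball (by rw [Real.ball_eq_Ioo]; exact ⟨by linarith, by linarith⟩)
  have hu2 : u + ε/2 ∈ C := hball (by rw [Real.ball_eq_Ioo]; exact ⟨by linarith, by linarith⟩)
  have hlt : sInf C < sSup C :=
    lt_of_le_of_lt (csInf_le hbb hu1) (lt_of_lt_of_le (by linarith) (le_csSup hba hu2))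
  constructor
  · apply Subset.antisymm
    · intro x hx
      have h1 : sInf C ≤ x := csInf_le hbb hx
      have h2 : x ≤ sSup C := le_csSup hba hx
      have hni : sInf C ∉ C := by
        intro h
        obtain ⟨δ, hδ, hb⟩ := Metric.isOpen_iff.mp ho _ h
        have : sInf C - δ/2 ∈ C := hb (by rw [Real.ball_eq_Ioo]; exact ⟨by linarith, by linarith⟩)
        have := csInf_le hbb this; linarith
      have hns : sSup C ∉ C := by
        intro h
        obtain ⟨δ, hδ, hb⟩ := Metric.isOpen_iff.mp ho _ h
        have : sSup C + δ/2 ∈ C := hb (by rw [Real.ball_eq_Ioo]; exact ⟨by linarith, by linarith⟩)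
        have := le_csSup hba this; linarith
      exact ⟨lt_of_le_of_ne h1 (by rintro rfl; exact hni hx),
             lt_of_le_of_ne h2 (by rintro rfl; exact hns hx)⟩
    · rintro x ⟨h1, h2⟩
      obtain ⟨y, hy, hyx⟩ := (csInf_lt_iff hbb ⟨u, hu⟩).mp h1
      obtain ⟨z, hz, hxz⟩ := (lt_csSup_iff hba ⟨u, hu⟩).mp h2
      exact hOC.out hy hz ⟨hyx.le, hxz.le⟩
  · exact hlt

lemma gap_struct {K U : Set ℝ} (hK : IsCompact K) (hne : K.Nonempty) (hU : IsGap K U) :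
    ∃ a b : ℝ, a < b ∧ a ∈ K ∧ b ∈ K ∧ U = Ioo a b ∧ Ioo a b ⊆ cantorHull K \ K := by
  obtain ⟨u, huF, rfl⟩ := hU
  set F := cantorHull K \ K with hF
  have hoF : IsOpen F := hull_diff_open hK hne
  set C := connectedComponentIn F u with hC
  have hCo : IsOpen C := hoF.connectedComponentIn
  have hCc : IsPreconnected C := isPreconnected_connectedComponentIn
  have hCne : C.Nonempty := ⟨u, mem_connectedComponentIn huF⟩
  have hCF : C ⊆ F := connectedComponentIn_subset F u
  have hbd : Bornology.IsBounded C :=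
    (isBounded_Icc (sInf K) (sSup K)).subset (fun x hx => (hCF hx).1)
  obtain ⟨hCeq, hab⟩ := open_conn_eq_Ioo hCo hCc hCne hbd
  set a := sInf C
  set b := sSup C
  refine ⟨a, b, hab, ?_, ?_, hCeq, by rw [← hCeq]; exact hCF⟩
  -- endpoints a, b ∈ K
  · by_contra haK
    have haH : a ∈ cantorHull K := by
      have h1 : sInf K ≤ a := le_csInf hCne (fun x hx => (hCF hx).1.1)
      have h2 : a ≤ sSup K := le_trans (csInf_le hbd.bddBelow hCne.choose_spec)
        (hCF hCne.choose_spec).1.2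
      exact ⟨h1, h2⟩
    have haF : a ∈ F := ⟨haH, haK⟩
    obtain ⟨ε, hε, hball⟩ := Metric.isOpen_iff.mp hoF a haF
    set w := min b (a + ε) with hw
    have hwa : a < w := lt_min hab (by linarith)
    have hwb2 : w ≤ b := min_le_left _ _
    have hsub : Ioo (a - ε) w ⊆ F := by
      intro x hx
      rcases le_or_gt x a with h | h
      · exact hball (by rw [Real.ball_eq_Ioo]; exact ⟨hx.1, lt_of_le_of_lt h (by linarith)⟩)
      · have : x ∈ C := by rw [hCeq]; exact ⟨h, lt_of_lt_of_le hx.2 (min_le_left _ _)⟩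
        exact hCF this
    have hz : (a + w)/2 ∈ C := by rw [hCeq]; exact ⟨by linarith, by linarith⟩
    have h2 : Ioo (a - ε) w ⊆ C := by
      have := (isPreconnected_Ioo (a := a - ε) (b := w)).subset_connectedComponentIn
        (x := (a+w)/2) ⟨by linarith, by linarith⟩ hsub
      rwa [← connectedComponentIn_eq hz] at this
    have : a ∈ C := h2 ⟨by linarith, hwa⟩
    exact (hCF this).2 (by rw [hCeq] at this; exact absurd this.1 (lt_irrefl a))
  · by_contra hbK
    have hbH : b ∈ cantorHull K := by
      have h2 : b ≤ sSup K := csSup_le hCne (fun x hx => (hCF hx).1.2)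
      have h1 : sInf K ≤ b := le_trans (hCF hCne.choose_spec).1.1
        (le_csSup hbd.bddAbove hCne.choose_spec)
      exact ⟨h1, h2⟩
    have hbF : b ∈ F := ⟨hbH, hbK⟩
    obtain ⟨ε, hε, hball⟩ := Metric.isOpen_iff.mp hoF b hbF
    set w := max a (b - ε) with hw
    have hwb : w < b := max_lt hab (by linarith)
    have hwa2 : a ≤ w := le_max_left _ _
    have hsub : Ioo w (b + ε) ⊆ F := by
      intro x hx
      rcases le_or_gt b x with h | h
      · exact hball (by rw [Real.ball_eq_Ioo]; exact ⟨lt_of_lt_of_le (by linarith) h, hx.2⟩)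
      · have : x ∈ C := by rw [hCeq]; exact ⟨lt_of_le_of_lt (le_max_left _ _) hx.1, h⟩
        exact hCF this
    have hz : (w + b)/2 ∈ C := by rw [hCeq]; exact ⟨by linarith, by linarith⟩
    have h2 : Ioo w (b + ε) ⊆ C := by
      have := (isPreconnected_Ioo (a := w) (b := b + ε)).subset_connectedComponentIn
        (x := (w+b)/2) ⟨by linarith, by linarith⟩ hsub
      rwa [← connectedComponentIn_eq hz] at this
    have : b ∈ C := h2 ⟨hwb, by linarith⟩
    rw [hCeq] at this; exact absurd this.2 (lt_irrefl b)

lemma comp_eq_Ioo {K : Set ℝ} {a b u : ℝ} (ha : a ∈ K) (hb : b ∈ K)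
    (hsub : Ioo a b ⊆ cantorHull K \ K) (hu : u ∈ Ioo a b) :
    connectedComponentIn (cantorHull K \ K) u = Ioo a b := by
  apply Subset.antisymm
  · intro y hy
    set C := connectedComponentIn (cantorHull K \ K) u with hC
    have huC : u ∈ C := mem_connectedComponentIn (hsub hu)
    have hOC : C.OrdConnected := (isPreconnected_connectedComponentIn).ordConnected
    have hCF : C ⊆ cantorHull K \ K := connectedComponentIn_subset _ _
    constructor
    · by_contra h
      push_neg at h
      have : a ∈ C := hOC.out hy huC ⟨h, hu.1.le⟩
      exact (hCF this).2 ha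
    · by_contra h
      push_neg at h
      have : b ∈ C := hOC.out huC hy ⟨hu.2.le, h⟩
      exact (hCF this).2 hb
  · exact isPreconnected_Ioo.subset_connectedComponentIn hu hsub

lemma gap_mem_presentation {K : Set ℝ} {𝒰 : ℕ → Set ℝ} (hP : IsPresentation K 𝒰)
    {U : Set ℝ} (hU : IsGap K U) : ∃ n, 𝒰 n = U := by
  have : U ∈ Set.range 𝒰 := by rw [hP.2]; exact hU
  exact this

lemma gap_is_gap {K : Set ℝ} {𝒰 : ℕ → Set ℝ} (hP : IsPresentation K 𝒰) (n : ℕ) :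
    IsGap K (𝒰 n) := by
  have : 𝒰 n ∈ Set.range 𝒰 := ⟨n, rfl⟩
  rwa [hP.2] at this

lemma gaps_disjoint {K : Set ℝ} {𝒰 : ℕ → Set ℝ} (hP : IsPresentation K 𝒰)
    {n m : ℕ} (hnm : n ≠ m) : Disjoint (𝒰 n) (𝒰 m) := by
  rw [Set.disjoint_left]
  intro z hzn hzm
  obtain ⟨u, hu, hUeq⟩ := gap_is_gap hP n
  obtain ⟨v, hv, hVeq⟩ := gap_is_gap hP m
  have h1 : connectedComponentIn (cantorHull K \ K) u = connectedComponentIn (cantorHull K \ K) z :=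
    connectedComponentIn_eq (by rw [← hUeq]; exact hzn)
  have h2 : connectedComponentIn (cantorHull K \ K) v = connectedComponentIn (cantorHull K \ K) z :=
    connectedComponentIn_eq (by rw [← hVeq]; exact hzm)
  exact hnm (hP.1 (by rw [hUeq, hVeq, h1, h2]))

lemma mem_hull_of_mem {K : Set ℝ} (hK : IsCompact K) {x : ℝ} (hx : x ∈ K) :
    x ∈ cantorHull K :=
  ⟨csInf_le hK.bddBelow hx, le_csSup hK.bddAbove hx⟩

lemma gap_subset_hull_diff {K : Set ℝ} {𝒰 : ℕ → Set ℝ} (hP : IsPresentation K 𝒰) (n : ℕ) :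
    𝒰 n ⊆ cantorHull K \ K := by
  obtain ⟨u, hu, hUeq⟩ := gap_is_gap hP n
  rw [hUeq]; exact connectedComponentIn_subset _ _

lemma mem_bridge_self {K : Set ℝ} (hK : IsCompact K) {𝒰 : ℕ → Set ℝ}
    (hP : IsPresentation K 𝒰) (n : ℕ) {u : ℝ} (hu : u ∈ K) : u ∈ bridge K 𝒰 n u := by
  apply mem_connectedComponentIn
  refine ⟨mem_hull_of_mem hK hu, ?_⟩
  simp only [Set.mem_iUnion, not_exists]
  intro i _ hui
  exact (gap_subset_hull_diff hP i hui).2 hu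

lemma bridge_subset {K : Set ℝ} {𝒰 : ℕ → Set ℝ} (n : ℕ) (u : ℝ) :
    bridge K 𝒰 n u ⊆ cantorHull K \ ⋃ i ∈ Finset.range (n + 1), 𝒰 i :=
  connectedComponentIn_subset _ _

/-- bridge at the left endpoint `c` of the gap `𝒰 n = Ioo c d` lies in `Iic c`. -/
lemma bridge_left_subset_Iic {K : Set ℝ} (hK : IsCompact K) {𝒰 : ℕ → Set ℝ}
    (hP : IsPresentation K 𝒰) {n : ℕ} {c d : ℝ} (hcd : c < d) (hgap : 𝒰 n = Ioo c d)
    (hc : c ∈ K) : bridge K 𝒰 n c ⊆ Iic c := by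
  intro y hy
  by_contra h
  replace h : c < y := by simpa [Set.mem_Iic, not_le] using h
  have hcB : c ∈ bridge K 𝒰 n c := mem_bridge_self hK hP n hc
  have hOC : (bridge K 𝒰 n c).OrdConnected :=
    (isPreconnected_connectedComponentIn).ordConnected
  set w := (c + min d y)/2 with hw
  have h1 : c < min d y := lt_min hcd h
  have hwB : w ∈ bridge K 𝒰 n c := hOC.out hcB hy
    ⟨by linarith, by have := min_le_right d y; linarith⟩
  have hwU : w ∈ 𝒰 n := by
    rw [hgap]; exact ⟨by linarith, by have := min_le_left d y; linarith⟩
  have := (bridge_subset n c hwB).2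
  exact this (Set.mem_biUnion (Finset.self_mem_range_succ n) hwU)

lemma bridge_right_subset_Ici {K : Set ℝ} (hK : IsCompact K) {𝒰 : ℕ → Set ℝ}
    (hP : IsPresentation K 𝒰) {n : ℕ} {c d : ℝ} (hcd : c < d) (hgap : 𝒰 n = Ioo c d)
    (hd : d ∈ K) : bridge K 𝒰 n d ⊆ Ici d := by
  intro y hy
  by_contra h
  replace h : y < d := by simpa [Set.mem_Ici, not_le] using h
  have hdB : d ∈ bridge K 𝒰 n d := mem_bridge_self hK hP n hd
  have hOC : (bridge K 𝒰 n d).OrdConnected :=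
    (isPreconnected_connectedComponentIn).ordConnected
  set w := (max c y + d)/2 with hw
  have h1 : max c y < d := max_lt hcd h
  have hwB : w ∈ bridge K 𝒰 n d := hOC.out hy hdB
    ⟨by have := le_max_right c y; linarith, by linarith⟩
  have hwU : w ∈ 𝒰 n := by
    rw [hgap]; exact ⟨by have := le_max_left c y; linarith, by linarith⟩
  have := (bridge_subset n d hwB).2
  exact this (Set.mem_biUnion (Finset.self_mem_range_succ n) hwU)

lemma bridge_bounded (K : Set ℝ) (𝒰 : ℕ → Set ℝ) (n : ℕ) (u : ℝ) :
    Bornology.IsBounded (bridge K 𝒰 n u) :=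
  (isBounded_Icc (sInf K) (sSup K)).subset (fun x hx => ((bridge_subset n u) hx).1)

lemma bridge_reach_left {K : Set ℝ} (hK : IsCompact K) {𝒰 : ℕ → Set ℝ}
    (hP : IsPresentation K 𝒰) {n : ℕ} {c d : ℝ} (hcd : c < d) (hgap : 𝒰 n = Ioo c d)
    (hc : c ∈ K) {L p : ℝ} (hL : L < diam (bridge K 𝒰 n c))
    (hp1 : c - L ≤ p) (hp2 : p ≤ c) : p ∈ bridge K 𝒰 n c := by
  set B := bridge K 𝒰 n c with hB
  have hcB : c ∈ B := mem_bridge_self hK hP n hc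
  have hsub : B ⊆ Iic c := bridge_left_subset_Iic hK hP hcd hgap hc
  have hbd := bridge_bounded K 𝒰 n c
  have hbb : BddBelow B := hbd.bddBelow
  have hle : sInf B ≤ c := csInf_le hbb hcB
  have hdiam : diam B ≤ c - sInf B := by
    apply diam_le_of_forall_dist_le (by linarith)
    intro x hx y hy
    rw [Real.dist_eq, abs_le]
    have h1 := csInf_le hbb hx
    have h2 := csInf_le hbb hy
    have h3 := hsub hx
    have h4 := hsub hy
    simp only [Set.mem_Iic] at h3 h4
    constructor <;> linarith
  have : sInf B < p := by linarith
  obtain ⟨y, hyB, hyp⟩ := (csInf_lt_iff hbb ⟨c, hcB⟩).mp this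
  exact ((isPreconnected_connectedComponentIn).ordConnected).out hyB hcB ⟨hyp.le, hp2⟩

lemma bridge_reach_right {K : Set ℝ} (hK : IsCompact K) {𝒰 : ℕ → Set ℝ}
    (hP : IsPresentation K 𝒰) {n : ℕ} {c d : ℝ} (hcd : c < d) (hgap : 𝒰 n = Ioo c d)
    (hd : d ∈ K) {L p : ℝ} (hL : L < diam (bridge K 𝒰 n d))
    (hp1 : d ≤ p) (hp2 : p ≤ d + L) : p ∈ bridge K 𝒰 n d := by
  set B := bridge K 𝒰 n d with hB
  have hdB : d ∈ B := mem_bridge_self hK hP n hd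
  have hsub : B ⊆ Ici d := bridge_right_subset_Ici hK hP hcd hgap hd
  have hbd := bridge_bounded K 𝒰 n d
  have hba : BddAbove B := hbd.bddAbove
  have hle : d ≤ sSup B := le_csSup hba hdB
  have hdiam : diam B ≤ sSup B - d := by
    apply diam_le_of_forall_dist_le (by linarith)
    intro x hx y hy
    rw [Real.dist_eq, abs_le]
    have h1 := le_csSup hba hx
    have h2 := le_csSup hba hy
    have h3 := hsub hx
    have h4 := hsub hy
    simp only [Set.mem_Ici] at h3 h4
    constructor <;> linarith
  have : p < sSup B := by linarith
  obtain ⟨y, hyB, hyp⟩ := (lt_csSup_iff hba ⟨d, hdB⟩).mp this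
  exact ((isPreconnected_connectedComponentIn).ordConnected).out hdB hyB ⟨hp1, hyp.le⟩

lemma diam_bridge_ge {K : Set ℝ} {𝒰 : ℕ → Set ℝ} {t : ℝ}
    (ht : t = ⨅ p : {p : ℕ × ℝ // p.2 ∈ frontier (𝒰 p.1)},
      diam (bridge K 𝒰 p.1.1 p.1.2) / diam (𝒰 p.1.1))
    {n : ℕ} {c d u : ℝ} (hcd : c < d) (hgap : 𝒰 n = Ioo c d) (hu : u = c ∨ u = d) :
    t * (d - c) ≤ diam (bridge K 𝒰 n u) := by
  have hmem : u ∈ frontier (𝒰 n) := by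
    rw [hgap, frontier_Ioo hcd]
    rcases hu with rfl | rfl
    · exact Or.inl rfl
    · exact Or.inr rfl
  have hbdd : BddBelow (Set.range fun p : {p : ℕ × ℝ // p.2 ∈ frontier (𝒰 p.1)} =>
      diam (bridge K 𝒰 p.1.1 p.1.2) / diam (𝒰 p.1.1)) := by
    refine ⟨0, ?_⟩
    rintro x ⟨p, rfl⟩
    exact div_nonneg diam_nonneg diam_nonneg
  have hle : t ≤ diam (bridge K 𝒰 n u) / diam (𝒰 n) := by
    rw [ht]; exact ciInf_le hbdd ⟨(n, u), hmem⟩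
  rw [hgap, Real.diam_Ioo hcd.le] at hle
  have hpos : (0:ℝ) < d - c := by linarith
  calc t * (d - c) ≤ (diam (bridge K 𝒰 n u) / (d - c)) * (d - c) := by
        apply mul_le_mul_of_nonneg_right hle hpos.le
    _ = diam (bridge K 𝒰 n u) := by field_simp

lemma step_main {K L : Set ℝ} (hK : IsCompact K) (hKne : K.Nonempty)
    (hL : IsCompact L) (hLne : L.Nonempty)
    (hdisj : ∀ x ∈ K, x ∉ L)
    {𝒰 𝒱 : ℕ → Set ℝ} (hPU : IsPresentation K 𝒰) (hPV : IsPresentation L 𝒱)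
    {s t : ℝ} (hst : 1 < s * t) (hs0 : 0 ≤ s) (ht0 : 0 ≤ t)
    (hsB : ∀ n (c d u : ℝ), c < d → 𝒰 n = Ioo c d → (u = c ∨ u = d) →
      s * (d - c) ≤ diam (bridge K 𝒰 n u))
    (htB : ∀ m (c d u : ℝ), c < d → 𝒱 m = Ioo c d → (u = c ∨ u = d) →
      t * (d - c) ≤ diam (bridge L 𝒱 m u))
    {n m : ℕ} {a b c d : ℝ} (ha : a ∈ K) (hb : b ∈ K) (hc : c ∈ L) (hd : d ∈ L)
    (hUn : 𝒰 n = Ioo a b) (hVm : 𝒱 m = Ioo c d)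
    (h1 : a < c) (h2 : c < b) (h3 : b < d) :
    (∃ m' > m, ∃ c' d', c' ∈ L ∧ d' ∈ L ∧ 𝒱 m' = Ioo c' d' ∧ c' < a ∧ a < d' ∧ d' < b) ∨
    (∃ n' > n, ∃ a' b', a' ∈ K ∧ b' ∈ K ∧ 𝒰 n' = Ioo a' b' ∧ c < a' ∧ a' < d ∧ d < b') := by
  have hab : a < b := h1.trans h2
  have hcd : c < d := h2.trans h3
  have hB1 : s * (b - a) ≤ diam (bridge K 𝒰 n b) := hsB n a b b hab hUn (Or.inr rfl)
  have hB2 : t * (d - c) ≤ diam (bridge L 𝒱 m c) := htB m c d c hcd hVm (Or.inl rfl)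
  have hcase : (b - a) < diam (bridge L 𝒱 m c) ∨ (d - c) < diam (bridge K 𝒰 n b) := by
    by_contra h
    push_neg at h
    obtain ⟨hA, hB⟩ := h
    have e1 : s * (b - a) ≤ d - c := le_trans hB1 hB
    have e2 : t * (d - c) ≤ b - a := le_trans hB2 hA
    nlinarith [mul_le_mul e1 e2 (mul_nonneg ht0 (by linarith)) (by linarith : (0:ℝ) ≤ d - c),
      mul_pos (by linarith : (0:ℝ) < b - a) (by linarith : (0:ℝ) < d - c)]
  rcases hcase with hcase | hcase
  · -- new gap of L containing a
    left
    have haB : a ∈ bridge L 𝒱 m c :=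
      bridge_reach_left hL hPV hcd hVm hc hcase (by linarith) h1.le
    have haH : a ∈ cantorHull L := ((bridge_subset m c) haB).1
    have haL : a ∉ L := hdisj a ha
    have hGap : IsGap L (connectedComponentIn (cantorHull L \ L) a) := ⟨a, ⟨haH, haL⟩, rfl⟩
    obtain ⟨m', hm'⟩ := gap_mem_presentation hPV hGap
    obtain ⟨c', d', hc'd', hc', hd', hm'eq, hm'sub⟩ := gap_struct hL hLne (gap_is_gap hPV m')
    have haV : a ∈ 𝒱 m' := by
      rw [hm']; exact mem_connectedComponentIn ⟨haH, haL⟩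
    have haIoo : a ∈ Ioo c' d' := by rwa [hm'eq] at haV
    have hnoU : a ∉ ⋃ i ∈ Finset.range (m + 1), 𝒱 i := ((bridge_subset m c) haB).2
    have hmm' : m < m' := by
      by_contra h
      push_neg at h
      exact hnoU (Set.mem_biUnion (Finset.mem_range.mpr (Nat.lt_succ_of_le h)) haV)
    -- 𝒱 m' ⊆ bridge
    have hGsub : 𝒱 m' ⊆ cantorHull L \ ⋃ i ∈ Finset.range (m + 1), 𝒱 i := by
      intro x hx
      refine ⟨(gap_subset_hull_diff hPV m' hx).1, ?_⟩
      intro hmem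
      simp only [Set.mem_iUnion] at hmem
      obtain ⟨i, hi, hxi⟩ := hmem
      have hne : i ≠ m' := by
        intro h; rw [h] at hi; exact absurd (Finset.mem_range.mp hi) (by omega)
      exact (gaps_disjoint hPV hne).le_bot ⟨hxi, hx⟩
    have hVB : 𝒱 m' ⊆ bridge L 𝒱 m c := by
      have hpre : IsPreconnected (𝒱 m') := by rw [hm'eq]; exact isPreconnected_Ioo
      have := hpre.subset_connectedComponentIn haV hGsub
      rwa [← connectedComponentIn_eq haB] at this
    have hIic : 𝒱 m' ⊆ Iic c := fun x hx => by
      have hxB := hVB hx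
      exact bridge_left_subset_Iic hL hPV hcd hVm hc hxB
    have hd'c : d' ≤ c := by
      by_contra h
      push_neg at h
      set w := (max c' c + d')/2 with hw
      have h1' : max c' c < d' := max_lt hc'd' h
      have hwIoo : w ∈ Ioo c' d' := ⟨by have := le_max_left c' c; simp only [hw]; linarith,
        by simp only [hw]; linarith⟩
      have := hIic (by rw [hm'eq]; exact hwIoo)
      simp only [Set.mem_Iic] at this
      have := le_max_right c' c
      simp only [hw] at *
      linarith
    exact ⟨m', hmm', c', d', hc', hd', hm'eq, by linarith [haIoo.1], haIoo.2, by linarith⟩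
  · -- new gap of K containing d
    right
    have hdB : d ∈ bridge K 𝒰 n b :=
      bridge_reach_right hK hPU hab hUn hb hcase h3.le (by linarith)
    have hdH : d ∈ cantorHull K := ((bridge_subset n b) hdB).1
    have hdK : d ∉ K := fun h => hdisj d h hd
    have hGap : IsGap K (connectedComponentIn (cantorHull K \ K) d) := ⟨d, ⟨hdH, hdK⟩, rfl⟩
    obtain ⟨n', hn'⟩ := gap_mem_presentation hPU hGap
    obtain ⟨a', b', ha'b', ha', hb', hn'eq, hn'sub⟩ := gap_struct hK hKne (gap_is_gap hPU n')
    have hdU : d ∈ 𝒰 n' := by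
      rw [hn']; exact mem_connectedComponentIn ⟨hdH, hdK⟩
    have hdIoo : d ∈ Ioo a' b' := by rwa [hn'eq] at hdU
    have hnoU : d ∉ ⋃ i ∈ Finset.range (n + 1), 𝒰 i := ((bridge_subset n b) hdB).2
    have hnn' : n < n' := by
      by_contra h
      push_neg at h
      exact hnoU (Set.mem_biUnion (Finset.mem_range.mpr (Nat.lt_succ_of_le h)) hdU)
    have hGsub : 𝒰 n' ⊆ cantorHull K \ ⋃ i ∈ Finset.range (n + 1), 𝒰 i := by
      intro x hx
      refine ⟨(gap_subset_hull_diff hPU n' hx).1, ?_⟩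
      intro hmem
      simp only [Set.mem_iUnion] at hmem
      obtain ⟨i, hi, hxi⟩ := hmem
      have hne : i ≠ n' := by
        intro h; rw [h] at hi; exact absurd (Finset.mem_range.mp hi) (by omega)
      exact (gaps_disjoint hPU hne).le_bot ⟨hxi, hx⟩
    have hUB : 𝒰 n' ⊆ bridge K 𝒰 n b := by
      have hpre : IsPreconnected (𝒰 n') := by rw [hn'eq]; exact isPreconnected_Ioo
      have := hpre.subset_connectedComponentIn hdU hGsub
      rwa [← connectedComponentIn_eq hdB] at this
    have hIci : 𝒰 n' ⊆ Ici b := fun x hx => by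
      have hxB := hUB hx
      exact bridge_right_subset_Ici hK hPU hab hUn hb hxB
    have hba' : b ≤ a' := by
      by_contra h
      push_neg at h
      set w := (a' + min b' b)/2 with hw
      have h1' : a' < min b' b := lt_min ha'b' h
      have hwIoo : w ∈ Ioo a' b' := ⟨by simp only [hw]; linarith,
        by have := min_le_left b' b; simp only [hw]; linarith⟩
      have := hIci (by rw [hn'eq]; exact hwIoo)
      simp only [Set.mem_Ici] at this
      have := min_le_right b' b
      simp only [hw] at *
      linarith
    exact ⟨n', hnn', a', b', ha', hb', hn'eq, by linarith, hdIoo.1, hdIoo.2⟩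

def LinkedO (K L : Set ℝ) (𝒰 𝒱 : ℕ → Set ℝ) (n m : ℕ) : Prop :=
  ∃ a b c d : ℝ, a ∈ K ∧ b ∈ K ∧ c ∈ L ∧ d ∈ L ∧
    𝒰 n = Ioo a b ∧ 𝒱 m = Ioo c d ∧ a < c ∧ c < b ∧ b < d

lemma step_linked {K L : Set ℝ} (hK : IsCompact K) (hKne : K.Nonempty)
    (hL : IsCompact L) (hLne : L.Nonempty)
    (hdisj : ∀ x ∈ K, x ∉ L)
    {𝒰 𝒱 : ℕ → Set ℝ} (hPU : IsPresentation K 𝒰) (hPV : IsPresentation L 𝒱)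
    {s t : ℝ} (hst : 1 < s * t) (hs0 : 0 ≤ s) (ht0 : 0 ≤ t)
    (hsB : ∀ n (c d u : ℝ), c < d → 𝒰 n = Ioo c d → (u = c ∨ u = d) →
      s * (d - c) ≤ Metric.diam (bridge K 𝒰 n u))
    (htB : ∀ m (c d u : ℝ), c < d → 𝒱 m = Ioo c d → (u = c ∨ u = d) →
      t * (d - c) ≤ Metric.diam (bridge L 𝒱 m u))
    {n m : ℕ} (hlink : LinkedO K L 𝒰 𝒱 n m) :
    (∃ m' > m, LinkedO L K 𝒱 𝒰 m' n) ∨ (∃ n' > n, LinkedO L K 𝒱 𝒰 m n') := by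
  obtain ⟨a, b, c, d, ha, hb, hc, hd, hUn, hVm, h1, h2, h3⟩ := hlink
  rcases step_main hK hKne hL hLne hdisj hPU hPV hst hs0 ht0 hsB htB ha hb hc hd hUn hVm h1 h2 h3
    with ⟨m', hm', c', d', hc', hd', heq, g1, g2, g3⟩ | ⟨n', hn', a', b', ha', hb', heq, g1, g2, g3⟩
  · exact Or.inl ⟨m', hm', c', d', a, b, hc', hd', ha, hb, heq, hUn, g1, g2, g3⟩
  · exact Or.inr ⟨n', hn', c, d, a', b', hc, hd, ha', hb', hVm, heq, g1, g2, g3⟩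

lemma linked_len {K L : Set ℝ} {𝒰 𝒱 : ℕ → Set ℝ} {n m : ℕ} {δ : ℝ}
    (hδ : ∀ p ∈ K, ∀ q ∈ L, δ ≤ dist p q) (hlink : LinkedO K L 𝒰 𝒱 n m) :
    ENNReal.ofReal δ ≤ MeasureTheory.volume (𝒰 n) ∧
      ENNReal.ofReal δ ≤ MeasureTheory.volume (𝒱 m) := by
  obtain ⟨a, b, c, d, ha, hb, hc, hd, hUn, hVm, h1, h2, h3⟩ := hlink
  have e1 : δ ≤ c - a := by
    have := hδ a ha c hc
    rw [Real.dist_eq, abs_of_nonpos (by linarith : a - c ≤ 0)] at this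
    linarith
  have e2 : δ ≤ d - b := by
    have := hδ b hb d hd
    rw [Real.dist_eq, abs_of_nonpos (by linarith : b - d ≤ 0)] at this
    linarith
  rw [hUn, hVm, Real.volume_Ioo, Real.volume_Ioo]
  exact ⟨ENNReal.ofReal_le_ofReal (by linarith), ENNReal.ofReal_le_ofReal (by linarith)⟩

lemma sep_pos {K L : Set ℝ} (hK : IsCompact K) (hKne : K.Nonempty)
    (hL : IsCompact L) (hLne : L.Nonempty) (hdisj : ∀ x ∈ K, x ∉ L) :
    ∃ δ > 0, ∀ p ∈ K, ∀ q ∈ L, δ ≤ dist p q := by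
  obtain ⟨x₀, hx₀, hmin⟩ := hK.exists_isMinOn hKne (continuous_infDist_pt L).continuousOn
  refine ⟨infDist x₀ L, (hL.isClosed.notMem_iff_infDist_pos hLne).mp (hdisj x₀ hx₀), ?_⟩
  intro p hp q hq
  exact le_trans (hmin hp) (infDist_le_dist_of_mem hq)

lemma gaps_large_finite {K : Set ℝ} {𝒰 : ℕ → Set ℝ} (hK : IsCompact K) (hKne : K.Nonempty)
    (hP : IsPresentation K 𝒰) {δ : ℝ} (hδ : 0 < δ) :
    {n : ℕ | ENNReal.ofReal δ ≤ MeasureTheory.volume (𝒰 n)}.Finite := by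
  by_contra hinf
  have hinf' : {n : ℕ | ENNReal.ofReal δ ≤ MeasureTheory.volume (𝒰 n)}.Infinite := hinf
  obtain ⟨N, hN⟩ := exists_nat_gt ((sSup K - sInf K) / δ)
  have hSI : sInf K ≤ sSup K := csInf_le_csSup hKne hK.bddBelow hK.bddAbove
  have hN0 : 0 < (N:ℝ) := lt_of_le_of_lt (div_nonneg (by linarith) hδ.le) hN
  obtain ⟨F, hFsub, hFcard⟩ := hinf'.exists_subset_card_eq N
  have hmeas : ∀ n ∈ F, MeasurableSet (𝒰 n) := by
    intro n _
    obtain ⟨a, b, hab, _, _, heq, _⟩ := gap_struct hK hKne (gap_is_gap hP n)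
    rw [heq]; exact measurableSet_Ioo
  have hdisjF : (F : Set ℕ).PairwiseDisjoint 𝒰 := fun i _ j _ hij => gaps_disjoint hP hij
  have hsum : ∑ n ∈ F, MeasureTheory.volume (𝒰 n) = MeasureTheory.volume (⋃ n ∈ F, 𝒰 n) :=
    (MeasureTheory.measure_biUnion_finset hdisjF hmeas).symm
  have hsub : (⋃ n ∈ F, 𝒰 n) ⊆ Icc (sInf K) (sSup K) := by
    intro x hx
    simp only [Set.mem_iUnion] at hx
    obtain ⟨i, _, hxi⟩ := hx
    exact (gap_subset_hull_diff hP i hxi).1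
  have hvol : MeasureTheory.volume (⋃ n ∈ F, 𝒰 n) ≤ ENNReal.ofReal (sSup K - sInf K) := by
    calc MeasureTheory.volume (⋃ n ∈ F, 𝒰 n) ≤ MeasureTheory.volume (Icc (sInf K) (sSup K)) :=
        MeasureTheory.measure_mono hsub
      _ = ENNReal.ofReal (sSup K - sInf K) := Real.volume_Icc
  have hlow : (N : ENNReal) * ENNReal.ofReal δ ≤ ∑ n ∈ F, MeasureTheory.volume (𝒰 n) := by
    calc (N : ENNReal) * ENNReal.ofReal δ = ∑ _n ∈ F, ENNReal.ofReal δ := by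
          rw [Finset.sum_const, hFcard, nsmul_eq_mul]
      _ ≤ ∑ n ∈ F, MeasureTheory.volume (𝒰 n) :=
          Finset.sum_le_sum (fun n hn => hFsub hn)
  have hfinal : (N : ENNReal) * ENNReal.ofReal δ ≤ ENNReal.ofReal (sSup K - sInf K) := by
    rw [hsum] at hlow
    exact le_trans hlow hvol
  have hcast : ENNReal.ofReal ((N:ℝ) * δ) ≤ ENNReal.ofReal (sSup K - sInf K) := by
    rwa [ENNReal.ofReal_mul hN0.le, ENNReal.ofReal_natCast]
  have h2 : (N:ℝ) * δ ≤ sSup K - sInf K :=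
    (ENNReal.ofReal_le_ofReal_iff (by linarith)).mp hcast
  rw [div_lt_iff₀ hδ] at hN
  linarith

lemma initial_pair {K L : Set ℝ} (hK : IsCompact K) (hKne : K.Nonempty)
    (hL : IsCompact L) (hLne : L.Nonempty) (hdisj : ∀ x ∈ K, x ∉ L)
    {𝒰 𝒱 : ℕ → Set ℝ} (hPU : IsPresentation K 𝒰) (hPV : IsPresentation L 𝒱)
    (hint : Interleaved K L) :
    ∃ n m, LinkedO K L 𝒰 𝒱 n m ∨ LinkedO L K 𝒱 𝒰 m n := by
  obtain ⟨hG1, hG2, hI1, hI2, _, _⟩ := hint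
  have hα₂ : sInf L ∈ L := hL.sInf_mem hLne
  have hβ₂ : sSup L ∈ L := hL.sSup_mem hLne
  -- find x ∈ K ∩ [sInf L, sSup L]
  have hx : ∃ x ∈ K, x ∈ Icc (sInf L) (sSup L) := by
    by_contra hno
    push_neg at hno
    have hno' : ∀ x ∈ K, x < sInf L ∨ sSup L < x := by
      intro x hxK
      have := hno x hxK
      simp only [Set.mem_Icc, not_and_or, not_le] at this
      tauto
    obtain ⟨x₁, hx₁K, hx₁⟩ : ∃ x ∈ K, ¬ x < sInf L := by
      by_contra h; push_neg at h; exact hI1 (fun x hxK => h x hxK)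
    obtain ⟨x₀, hx₀K, hx₀⟩ : ∃ x ∈ K, ¬ sSup L < x := by
      by_contra h; push_neg at h; exact hI2 (fun x hxK => h x hxK)
    push_neg at hx₁ hx₀
    have hx₁' : sSup L < x₁ := by
      rcases hno' x₁ hx₁K with h|h
      · linarith
      · exact h
    have hx₀' : x₀ < sInf L := by
      rcases hno' x₀ hx₀K with h|h
      · exact h
      · exact absurd hx₀ (not_le_of_gt h)
    set Left := K ∩ Iic (sInf L) with hLeft
    set Right := K ∩ Ici (sSup L) with hRight
    have hLc : IsCompact Left := hK.inter_right isClosed_Iic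
    have hRc : IsCompact Right := hK.inter_right isClosed_Ici
    have hLne' : Left.Nonempty := ⟨x₀, hx₀K, hx₀'.le⟩
    have hRne' : Right.Nonempty := ⟨x₁, hx₁K, hx₁'.le⟩
    set A := sSup Left with hA
    set B := sInf Right with hB
    have hAmem : A ∈ Left := hLc.sSup_mem hLne'
    have hBmem : B ∈ Right := hRc.sInf_mem hRne'
    have hAK : A ∈ K := hAmem.1
    have hBK : B ∈ K := hBmem.1
    have hAlt : A < sInf L := by
      rcases hno' A hAK with h|h
      · exact h
      · exact absurd hAmem.2 (not_le_of_gt (lt_of_le_of_lt (csInf_le_csSup hLne hL.bddBelow hL.bddAbove) h))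
    have hBgt : sSup L < B := by
      rcases hno' B hBK with h|h
      · exact absurd hBmem.2 (not_le_of_gt (lt_of_lt_of_le h (csInf_le_csSup hLne hL.bddBelow hL.bddAbove)))
      · exact h
    have hAB : A < B := by
      have := csInf_le_csSup hLne hL.bddBelow hL.bddAbove
      linarith
    have hgapK : Ioo A B ⊆ cantorHull K \ K := by
      intro y hy
      refine ⟨⟨le_trans (mem_hull_of_mem hK hAK).1 hy.1.le, le_trans hy.2.le (mem_hull_of_mem hK hBK).2⟩, ?_⟩
      intro hyK
      rcases hno' y hyK with h|h
      · have : y ∈ Left := ⟨hyK, h.le⟩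
        exact absurd (le_csSup hLc.bddAbove this) (not_le_of_gt hy.1)
      · have : y ∈ Right := ⟨hyK, h.le⟩
        exact absurd (csInf_le hRc.bddBelow this) (not_le_of_gt hy.2)
    have hmemIoo : sInf L ∈ Ioo A B := ⟨hAlt, by linarith [csInf_le_csSup hLne hL.bddBelow hL.bddAbove]⟩
    have hIsGap : IsGap K (Ioo A B) :=
      ⟨sInf L, hgapK hmemIoo, (comp_eq_Ioo hAK hBK hgapK hmemIoo).symm⟩
    apply hG2
    refine ⟨Ioo A B, hIsGap, ?_⟩
    intro q hq
    exact ⟨lt_of_lt_of_le hAlt (csInf_le hL.bddBelow hq), lt_of_le_of_lt (le_csSup hL.bddAbove hq) hBgt⟩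
  obtain ⟨x, hxK, hxI⟩ := hx
  have hxL : x ∉ L := hdisj x hxK
  have hxF : x ∈ cantorHull L \ L := ⟨hxI, hxL⟩
  have hVgap : IsGap L (connectedComponentIn (cantorHull L \ L) x) := ⟨x, hxF, rfl⟩
  obtain ⟨m, hm⟩ := gap_mem_presentation hPV hVgap
  obtain ⟨c, d, hcd, hcL, hdL, hVeq, hVsub⟩ := gap_struct hL hLne (gap_is_gap hPV m)
  have hxV : x ∈ 𝒱 m := by rw [hm]; exact mem_connectedComponentIn hxF
  have hxIoo : x ∈ Ioo c d := by rwa [hVeq] at hxV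
  by_cases hcase : c < sInf K ∧ sSup K < d
  · exfalso
    apply hG1
    refine ⟨𝒱 m, gap_is_gap hPV m, ?_⟩
    intro p hp
    rw [hVeq]
    exact ⟨lt_of_lt_of_le hcase.1 (csInf_le hK.bddBelow hp),
      lt_of_le_of_lt (le_csSup hK.bddAbove hp) hcase.2⟩
  · rw [not_and_or, not_lt, not_lt] at hcase
    rcases hcase with hcase | hcase
    · -- sInf K ≤ c : gap of K containing c, orientation O1
      have hcH : c ∈ cantorHull K :=
        ⟨hcase, le_trans hxIoo.1.le (le_csSup hK.bddAbove hxK)⟩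
      have hcK : c ∉ K := fun h => hdisj c h hcL
      have hUgap : IsGap K (connectedComponentIn (cantorHull K \ K) c) := ⟨c, ⟨hcH, hcK⟩, rfl⟩
      obtain ⟨n, hn⟩ := gap_mem_presentation hPU hUgap
      obtain ⟨a, b, hab, haK, hbK, hUeq, hUsub⟩ := gap_struct hK hKne (gap_is_gap hPU n)
      have hcU : c ∈ 𝒰 n := by rw [hn]; exact mem_connectedComponentIn ⟨hcH, hcK⟩
      have hcIoo : c ∈ Ioo a b := by rwa [hUeq] at hcU
      have hxnotU : x ∉ Ioo a b := fun h => (hUsub h).2 hxK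
      have hbx : b ≤ x := by
        by_contra h
        push_neg at h
        exact hxnotU ⟨lt_trans hcIoo.1 hxIoo.1, h⟩
      exact ⟨n, m, Or.inl ⟨a, b, c, d, haK, hbK, hcL, hdL, hUeq, hVeq,
        hcIoo.1, hcIoo.2, lt_of_le_of_lt hbx hxIoo.2⟩⟩
    · -- d ≤ sSup K : gap of K containing d, orientation O2
      have hdH : d ∈ cantorHull K :=
        ⟨le_trans (csInf_le hK.bddBelow hxK) hxIoo.2.le, hcase⟩
      have hdK : d ∉ K := fun h => hdisj d h hdL
      have hUgap : IsGap K (connectedComponentIn (cantorHull K \ K) d) := ⟨d, ⟨hdH, hdK⟩, rfl⟩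
      obtain ⟨n, hn⟩ := gap_mem_presentation hPU hUgap
      obtain ⟨a, b, hab, haK, hbK, hUeq, hUsub⟩ := gap_struct hK hKne (gap_is_gap hPU n)
      have hdU : d ∈ 𝒰 n := by rw [hn]; exact mem_connectedComponentIn ⟨hdH, hdK⟩
      have hdIoo : d ∈ Ioo a b := by rwa [hUeq] at hdU
      have hxnotU : x ∉ Ioo a b := fun h => (hUsub h).2 hxK
      have hxa : x ≤ a := by
        by_contra h
        push_neg at h
        exact hxnotU ⟨h, lt_trans hxIoo.2 hdIoo.2⟩
      exact ⟨n, m, Or.inr ⟨c, d, a, b, hcL, hdL, haK, hbK, hVeq, hUeq,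
        lt_of_lt_of_le hxIoo.1 hxa, hdIoo.1, hdIoo.2⟩⟩

/-- Newhouse gap lemma: if `τ(K₁)·τ(K₂) > 1` and `K₁, K₂` are interleaved
Cantor sets, then `K₁ ∩ K₂ ≠ ∅`. -/
theorem gap_lemma (K₁ K₂ : Set ℝ) (h₁ : IsCantorSet K₁) (h₂ : IsCantorSet K₂)
    (hτ : 1 < thickness K₁ * thickness K₂) (hint : Interleaved K₁ K₂) :
    (K₁ ∩ K₂).Nonempty := by
  by_contra hne
  rw [Set.not_nonempty_iff_eq_empty, Set.eq_empty_iff_forall_notMem] at hne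
  have hdisj : ∀ x ∈ K₁, x ∉ K₂ := fun x hx h2 => hne x ⟨hx, h2⟩
  have hdisj' : ∀ x ∈ K₂, x ∉ K₁ := fun x hx h => hdisj x h hx
  obtain ⟨hK₁, _, _, hK₁ne⟩ := h₁
  obtain ⟨hK₂, _, _, hK₂ne⟩ := h₂
  -- extract good presentations
  set F₁ : {𝒰 : ℕ → Set ℝ // IsPresentation K₁ 𝒰} → ℝ := fun 𝒰 =>
    ⨅ p : {p : ℕ × ℝ // p.2 ∈ frontier (𝒰.1 p.1)},
      Metric.diam (bridge K₁ 𝒰.1 p.1.1 p.1.2) / Metric.diam (𝒰.1 p.1.1) with hF₁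
  set F₂ : {𝒰 : ℕ → Set ℝ // IsPresentation K₂ 𝒰} → ℝ := fun 𝒰 =>
    ⨅ p : {p : ℕ × ℝ // p.2 ∈ frontier (𝒰.1 p.1)},
      Metric.diam (bridge K₂ 𝒰.1 p.1.1 p.1.2) / Metric.diam (𝒰.1 p.1.1) with hF₂
  have hth₁ : thickness K₁ = ⨆ 𝒰, F₁ 𝒰 := rfl
  have hth₂ : thickness K₂ = ⨆ 𝒰, F₂ 𝒰 := rfl
  have hF₁nn : ∀ 𝒰, 0 ≤ F₁ 𝒰 := fun 𝒰 =>
    Real.iInf_nonneg (fun p => div_nonneg Metric.diam_nonneg Metric.diam_nonneg)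
  have hF₂nn : ∀ 𝒰, 0 ≤ F₂ 𝒰 := fun 𝒰 =>
    Real.iInf_nonneg (fun p => div_nonneg Metric.diam_nonneg Metric.diam_nonneg)
  have hτ₁nn : 0 ≤ thickness K₁ := by rw [hth₁]; exact Real.iSup_nonneg hF₁nn
  have hτ₂nn : 0 ≤ thickness K₂ := by rw [hth₂]; exact Real.iSup_nonneg hF₂nn
  have hτ₁pos : 0 < thickness K₁ := by nlinarith
  have hτ₂pos : 0 < thickness K₂ := by nlinarith
  have hne₁ : Nonempty {𝒰 : ℕ → Set ℝ // IsPresentation K₁ 𝒰} := by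
    by_contra h
    rw [not_nonempty_iff] at h
    have : thickness K₁ = 0 := by
      rw [hth₁, iSup, Set.range_eq_empty, Real.sSup_empty]
    linarith
  have hne₂ : Nonempty {𝒰 : ℕ → Set ℝ // IsPresentation K₂ 𝒰} := by
    by_contra h
    rw [not_nonempty_iff] at h
    have : thickness K₂ = 0 := by
      rw [hth₂, iSup, Set.range_eq_empty, Real.sSup_empty]
    linarith
  set q := Real.sqrt (thickness K₁ * thickness K₂) with hq
  have hq2 : q ^ 2 = thickness K₁ * thickness K₂ := Real.sq_sqrt (by positivity)
  have hq0 : 0 ≤ q := Real.sqrt_nonneg _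
  have hq1 : 1 < q := by nlinarith
  obtain ⟨y₁, hy₁mem, hy₁⟩ : ∃ y ∈ Set.range F₁, thickness K₁ / q < y :=
    exists_lt_of_lt_csSup (Set.range_nonempty F₁)
      (by rw [← iSup, ← hth₁]; exact div_lt_self hτ₁pos hq1)
  obtain ⟨y₂, hy₂mem, hy₂⟩ : ∃ y ∈ Set.range F₂, thickness K₂ / q < y :=
    exists_lt_of_lt_csSup (Set.range_nonempty F₂)
      (by rw [← iSup, ← hth₂]; exact div_lt_self hτ₂pos hq1)
  obtain ⟨⟨𝒰, hPU⟩, rfl⟩ := hy₁mem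
  obtain ⟨⟨𝒱, hPV⟩, rfl⟩ := hy₂mem
  set s := F₁ ⟨𝒰, hPU⟩ with hs
  set t := F₂ ⟨𝒱, hPV⟩ with ht
  have hs0 : 0 ≤ s := hF₁nn _
  have ht0 : 0 ≤ t := hF₂nn _
  have hst : 1 < s * t := by
    have hqq : q * q = thickness K₁ * thickness K₂ := by nlinarith
    have h1 : thickness K₁ / q * (thickness K₂ / q) = 1 := by
      field_simp
      linarith
    nlinarith [mul_lt_mul'' hy₁ hy₂ (by positivity) (by positivity)]
  have hsB : ∀ n (c d u : ℝ), c < d → 𝒰 n = Ioo c d → (u = c ∨ u = d) →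
      s * (d - c) ≤ Metric.diam (bridge K₁ 𝒰 n u) := by
    intro n c d u hcd hgap hu
    exact diam_bridge_ge (by rw [hs, hF₁]) hcd hgap hu
  have htB : ∀ m (c d u : ℝ), c < d → 𝒱 m = Ioo c d → (u = c ∨ u = d) →
      t * (d - c) ≤ Metric.diam (bridge K₂ 𝒱 m u) := by
    intro m c d u hcd hgap hu
    exact diam_bridge_ge (by rw [ht, hF₂]) hcd hgap hu
  -- separation
  obtain ⟨δ, hδpos, hδ⟩ := sep_pos hK₁ hK₁ne hK₂ hK₂ne hdisj
  have hδ' : ∀ p ∈ K₂, ∀ q ∈ K₁, δ ≤ dist p q := fun p hp q hq => by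
    rw [dist_comm]; exact hδ q hq p hp
  -- the linked-pair predicate
  set P : ℕ → ℕ → Prop := fun n m => LinkedO K₁ K₂ 𝒰 𝒱 n m ∨ LinkedO K₂ K₁ 𝒱 𝒰 m n with hP
  obtain ⟨n₀, m₀, hP0⟩ := initial_pair hK₁ hK₁ne hK₂ hK₂ne hdisj hPU hPV hint
  have hstep : ∀ n m, P n m → ∃ n' m', P n' m' ∧ n + m < n' + m' := by
    intro n m hnm
    rcases hnm with h | h
    · rcases step_linked hK₁ hK₁ne hK₂ hK₂ne hdisj hPU hPV hst hs0 ht0 hsB htB h with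
        ⟨m', hm', hL'⟩ | ⟨n', hn', hL'⟩
      · exact ⟨n, m', Or.inr hL', by omega⟩
      · exact ⟨n', m, Or.inr hL', by omega⟩
    · rcases step_linked hK₂ hK₂ne hK₁ hK₁ne hdisj' hPV hPU
        (by rw [mul_comm] at hst; exact hst) ht0 hs0 htB hsB h with
        ⟨n', hn', hL'⟩ | ⟨m', hm', hL'⟩
      · exact ⟨n', m, Or.inl hL', by omega⟩
      · exact ⟨n, m', Or.inl hL', by omega⟩
  have hlen : ∀ n m, P n m → ENNReal.ofReal δ ≤ MeasureTheory.volume (𝒰 n) ∧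
      ENNReal.ofReal δ ≤ MeasureTheory.volume (𝒱 m) := by
    intro n m hnm
    rcases hnm with h | h
    · exact linked_len hδ h
    · exact (linked_len hδ' h).symm
  -- iterate
  have main : ∀ k : ℕ, ∃ p : ℕ × ℕ, P p.1 p.2 ∧ k ≤ p.1 + p.2 := by
    intro k
    induction k with
    | zero => exact ⟨(n₀, m₀), hP0, Nat.zero_le _⟩
    | succ k ih =>
      obtain ⟨p, hp, hk⟩ := ih
      obtain ⟨n', m', h1, h2⟩ := hstep p.1 p.2 hp
      exact ⟨(n', m'), h1, by omega⟩
  -- finiteness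
  have hfin₁ := gaps_large_finite hK₁ hK₁ne hPU hδpos
  have hfin₂ := gaps_large_finite hK₂ hK₂ne hPV hδpos
  obtain ⟨N₁, hN₁⟩ := hfin₁.bddAbove
  obtain ⟨N₂, hN₂⟩ := hfin₂.bddAbove
  obtain ⟨p, hp, hk⟩ := main (N₁ + N₂ + 1)
  obtain ⟨e1, e2⟩ := hlen p.1 p.2 hp
  have b1 : p.1 ≤ N₁ := hN₁ e1
  have b2 : p.2 ≤ N₂ := hN₂ e2
  omega
end

section
/- Let β > 1, 0 < δ < 1, and suppose |g'(x)| ≥ β for all x and |∂_y h| ≤ δ on the invariant set. Define h_N recursively by h_N(x,y) being the second coordinate of the N-th iterate of f(x,y) = (g(x), h(x,y)). If K := sup |∂_x h| and K' := K/(1 − δ/β), then |∂_x h_N(x,y)| ≤ K' · |(g^{N−1})'(x)| for all N ≥ 1 and all (x,y) in the invariant set. -/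
/-- for the skew product `f (x,y) = (g x, h (x,y))` with `|g'| ≥ β > 1` and
`|∂_y h| ≤ δ < 1` on the invariant set, the partial derivatives `A N = ∂_x h_N` of the
fiber components of the iterates (satisfying the chain-rule recursion) obey
`|∂_x h_N (x,y)| ≤ K' · |(g^{N-1})'(x)|` with `K' = K/(1 - δ/β)`, `K = sup |∂_x h|`. -/
theorem partial_x_iterate_bound
    (Λ : Set (ℝ × ℝ)) (f : ℝ × ℝ → ℝ × ℝ) (g gd : ℝ → ℝ) (h hx hy : ℝ × ℝ → ℝ)
    (hf : ∀ z, f z = (g z.1, h z)) (hinv : ∀ z ∈ Λ, f z ∈ Λ)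
    (β δ K K' : ℝ) (hβ : 1 < β) (hδ0 : 0 < δ) (hδ1 : δ < 1)
    (hgd : ∀ z ∈ Λ, β ≤ |gd z.1|)
    (hhy : ∀ z ∈ Λ, |hy z| ≤ δ)
    (hhx : ∀ z ∈ Λ, |hx z| ≤ K)
    (hK' : K' = K / (1 - δ / β))
    (A : ℕ → (ℝ × ℝ) → ℝ)
    (hA1 : ∀ z, A 1 z = hx z)
    (hAsucc : ∀ n, 1 ≤ n → ∀ z, A (n + 1) z =
      hx (f^[n] z) * (∏ i ∈ Finset.range n, gd ((f^[i] z).1)) + hy (f^[n] z) * A n z) :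
    ∀ N, 1 ≤ N → ∀ z ∈ Λ,
      |A N z| ≤ K' * ∏ i ∈ Finset.range (N - 1), |gd ((f^[i] z).1)| := by
  -- iterates stay in Λ
  have hmem : ∀ (i : ℕ) (z : ℝ × ℝ), z ∈ Λ → f^[i] z ∈ Λ := by
    intro i
    induction i with
    | zero => intro z hz; simpa using hz
    | succ i ih =>
      intro z hz
      rw [Function.iterate_succ_apply']
      exact hinv _ (ih z hz)
  have hβ0 : (0:ℝ) < β := lt_trans one_pos hβ
  have hfrac : δ / β < 1 := (div_lt_one hβ0).mpr (lt_trans hδ1 hβ)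
  have hden : 0 < 1 - δ / β := by linarith
  have hbd : (0:ℝ) < β - δ := by linarith
  have hid : K' * (β - δ) = K * β := by
    rw [hK']
    field_simp [hbd.ne', hβ0.ne']
  intro N
  induction N with
  | zero => intro habs; omega
  | succ n ih =>
    intro _ z hz
    have hK0 : 0 ≤ K := le_trans (abs_nonneg _) (hhx z hz)
    have hK'0 : 0 ≤ K' := by
      rw [hK']; positivity
    rcases Nat.eq_or_lt_of_le (Nat.one_le_iff_ne_zero.mpr (Nat.succ_ne_zero n)) with h1 | h1
    · -- n = 0, base case
      have hn0 : n = 0 := by omega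
      subst hn0
      simp only [hA1]
      have : |hx z| ≤ K := hhx z hz
      have hKK' : K ≤ K' := by
        rw [hK', le_div_iff₀ hden]
        nlinarith [mul_nonneg hK0 (div_pos hδ0 hβ0).le]
      simpa using le_trans this hKK'
    · -- n ≥ 1
      have hn1 : 1 ≤ n := by omega
      have hihn := ih hn1 z hz
      rw [hAsucc n hn1 z]
      set P : ℕ → ℝ := fun m => ∏ i ∈ Finset.range m, |gd ((f^[i] z).1)| with hP
      have hPnonneg : ∀ m, 0 ≤ P m := fun m =>
        Finset.prod_nonneg (fun i _ => abs_nonneg _)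
      have habsprod : |∏ i ∈ Finset.range n, gd ((f^[i] z).1)| = P n := by
        simpa [hP] using Finset.abs_prod (Finset.range n) (fun i => gd ((f^[i] z).1))
      have hG : β ≤ |gd ((f^[(n-1)] z).1)| := hgd _ (hmem _ z hz)
      have hsplit : P n = P (n-1) * |gd ((f^[(n-1)] z).1)| := by
        have : n = (n-1) + 1 := by omega
        rw [this] at *
        simp [hP, Finset.prod_range_succ]
      have hihn' : |A n z| ≤ K' * P (n-1) := by
        simpa [hP] using hihn
      have step1 : |hx (f^[n] z) * (∏ i ∈ Finset.range n, gd ((f^[i] z).1))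
          + hy (f^[n] z) * A n z| ≤ K * P n + δ * |A n z| := by
        calc |hx (f^[n] z) * (∏ i ∈ Finset.range n, gd ((f^[i] z).1))
              + hy (f^[n] z) * A n z|
            ≤ |hx (f^[n] z)| * |∏ i ∈ Finset.range n, gd ((f^[i] z).1)|
              + |hy (f^[n] z)| * |A n z| := by
              rw [← abs_mul, ← abs_mul]; exact abs_add_le _ _
          _ ≤ K * P n + δ * |A n z| := by
              rw [habsprod]
              have t1 : |hx (f^[n] z)| * P n ≤ K * P n :=
                mul_le_mul_of_nonneg_right (hhx _ (hmem n z hz)) (hPnonneg n)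
              have t2 : |hy (f^[n] z)| * |A n z| ≤ δ * |A n z| :=
                mul_le_mul_of_nonneg_right (hhy _ (hmem n z hz)) (abs_nonneg _)
              linarith
      have step2 : K * P n + δ * |A n z| ≤ K * P n + δ * (K' * P (n-1)) := by
        have := hihn'
        nlinarith
      have step3 : K * P n + δ * (K' * P (n-1)) ≤ K' * P n := by
        rw [hsplit]
        set G := |gd ((f^[(n-1)] z).1)|
        have hPn1 := hPnonneg (n-1)
        have hid2 : K' * (β - δ) * (P (n-1) * G) = K * β * (P (n-1) * G) := by rw [hid]
        have hint3 : 0 ≤ δ * K' * P (n-1) * (G - β) :=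
          mul_nonneg (mul_nonneg (mul_nonneg hδ0.le hK'0) hPn1) (sub_nonneg.mpr hG)
        rw [← mul_le_mul_iff_right₀ hβ0]
        nlinarith [hid2, hint3]
      have goalP : |hx (f^[n] z) * (∏ i ∈ Finset.range n, gd ((f^[i] z).1))
          + hy (f^[n] z) * A n z| ≤ K' * P n := le_trans step1 (le_trans step2 step3)
      have : n + 1 - 1 = n := by omega
      rw [this]
      simpa [hP] using goalP
end

section
/- Under the assumptions that β > 1 is large enough that 1/β² · 1/(1 − δ/β) < 1.2/β² with δ < 1, suppose ω satisfies the series formula ω(ẑ) = (1/g'(x_{−1}))·∂_x h(z_{−1}) + Σ_{i=2}^∞ [∂_x h(z_{−i})·∂_y h(z_{−i+1})⋯∂_y h(z_{−1})] / [g'(x_{−1})⋯g'(x_{−i})] for every prehistory ẑ. If ẑ and ẑ' are two prehistories of the same point z with z_{−1} ≠ z_{−1}', ∂_x h(z_{−1}) = 1, ∂_x h(z_{−1}') = −1, β < g'(x) < β² for all relevant x, |∂_x h| ≤ 1 and |∂_y h| ≤ δ everywhere, then |ω(ẑ) − ω(ẑ')| > 0.7/β². -/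
set_option maxHeartbeats 1000000 in
/-- Auxiliary bound lemma. -/
lemma omega_head_approx
    (Λ : Set (ℝ × ℝ)) (gd : ℝ → ℝ) (hx hy : ℝ × ℝ → ℝ)
    (β δ : ℝ) (hβ : 1 < β) (hδ0 : 0 ≤ δ) (hr6 : δ / β < 1 / 6)
    (hgd : ∀ z ∈ Λ, β < gd z.1 ∧ gd z.1 < β ^ 2)
    (hhx : ∀ z ∈ Λ, |hx z| ≤ 1)
    (hhy : ∀ z ∈ Λ, |hy z| ≤ δ)
    (zh : ℕ → ℝ × ℝ) (hmem : ∀ n, zh n ∈ Λ) :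
    |(∑' i : ℕ,
        hx (zh (i + 1)) * (∏ j ∈ Finset.range i, hy (zh (j + 1))) /
          ∏ j ∈ Finset.range (i + 1), gd ((zh (j + 1)).1))
      - hx (zh 1) / gd ((zh 1).1)| ≤ (1 / 5) * (1 / gd ((zh 1).1)) := by
  have hβ0 : (0 : ℝ) < β := by linarith
  set d : ℝ := gd ((zh 1).1) with hd_def
  have hdβ : β < d := (hgd _ (hmem 1)).1
  have hd0 : 0 < d := by linarith
  set r : ℝ := δ / β with hr_def
  have hr0 : 0 ≤ r := div_nonneg hδ0 hβ0.le
  have hr1 : r < 1 := by rw [hr_def]; linarith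
  set a : ℕ → ℝ := fun i =>
    hx (zh (i + 1)) * (∏ j ∈ Finset.range i, hy (zh (j + 1))) /
      ∏ j ∈ Finset.range (i + 1), gd ((zh (j + 1)).1) with ha_def
  -- pointwise bound on the terms
  have habs : ∀ i, |a i| ≤ (1 / d) * r ^ i := by
    intro i
    have hnum : |hx (zh (i + 1)) * ∏ j ∈ Finset.range i, hy (zh (j + 1))| ≤ δ ^ i := by
      rw [abs_mul]
      have h1 : |∏ j ∈ Finset.range i, hy (zh (j + 1))| ≤ δ ^ i := by
        rw [Finset.abs_prod]
        calc (∏ j ∈ Finset.range i, |hy (zh (j + 1))|)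
            ≤ ∏ j ∈ Finset.range i, δ :=
              Finset.prod_le_prod (fun j _ => abs_nonneg _) (fun j _ => hhy _ (hmem (j + 1)))
          _ = δ ^ i := by rw [Finset.prod_const, Finset.card_range]
      calc |hx (zh (i + 1))| * |∏ j ∈ Finset.range i, hy (zh (j + 1))|
          ≤ 1 * (δ ^ i) := mul_le_mul (hhx _ (hmem (i + 1))) h1 (abs_nonneg _) zero_le_one
        _ = δ ^ i := one_mul _
    have hden : d * β ^ i ≤ ∏ j ∈ Finset.range (i + 1), gd ((zh (j + 1)).1) := by
      rw [Finset.prod_range_succ']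
      have h2 : β ^ i ≤ ∏ j ∈ Finset.range i, gd ((zh (j + 1 + 1)).1) := by
        calc β ^ i = ∏ j ∈ Finset.range i, β := by
              rw [Finset.prod_const, Finset.card_range]
          _ ≤ _ := Finset.prod_le_prod (fun j _ => hβ0.le)
                (fun j _ => (hgd _ (hmem (j + 1 + 1))).1.le)
      calc d * β ^ i = β ^ i * d := mul_comm _ _
        _ ≤ (∏ j ∈ Finset.range i, gd ((zh (j + 1 + 1)).1)) * gd ((zh (0 + 1)).1) := by
            have heq : d = gd ((zh (0 + 1)).1) := rfl
            rw [← heq]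
            exact mul_le_mul_of_nonneg_right h2 hd0.le
    have hdenpos : 0 < ∏ j ∈ Finset.range (i + 1), gd ((zh (j + 1)).1) :=
      Finset.prod_pos (fun j _ => lt_trans hβ0 (hgd _ (hmem (j + 1))).1)
    have : |a i| = |hx (zh (i + 1)) * ∏ j ∈ Finset.range i, hy (zh (j + 1))| /
        ∏ j ∈ Finset.range (i + 1), gd ((zh (j + 1)).1) := by
      rw [ha_def, abs_div, abs_of_pos hdenpos]
    rw [this]
    have hstep : |hx (zh (i + 1)) * ∏ j ∈ Finset.range i, hy (zh (j + 1))| /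
        (∏ j ∈ Finset.range (i + 1), gd ((zh (j + 1)).1)) ≤ δ ^ i / (d * β ^ i) :=
      div_le_div₀ (by positivity) hnum (by positivity) hden
    refine hstep.trans (le_of_eq ?_)
    rw [hr_def, div_pow, div_mul_div_comm, one_mul]
  -- summability
  have hsum_geo : Summable (fun i : ℕ => (1 / d) * r ^ i) :=
    (summable_geometric_of_lt_one hr0 hr1).mul_left _
  have hsum_abs : Summable (fun i => |a i|) :=
    Summable.of_nonneg_of_le (fun i => abs_nonneg _) habs hsum_geo
  have hsa : Summable a := hsum_abs.of_abs
  have hzero : a 0 = hx (zh 1) / d := by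
    rw [ha_def]
    simp [Finset.prod_range_one, hd_def]
  have hsplit : (∑' i, a i) - hx (zh 1) / d = ∑' i, a (i + 1) := by
    rw [Summable.tsum_eq_zero_add hsa, hzero]; ring
  rw [hsplit]
  -- bound the tail
  have hsum_abs' : Summable (fun i => |a (i + 1)|) :=
    (summable_nat_add_iff (f := fun i => |a i|) 1).2 hsum_abs
  have hsum_geo' : Summable (fun i : ℕ => (1 / d) * r ^ (i + 1)) :=
    (summable_nat_add_iff (f := fun i : ℕ => (1 / d) * r ^ i) 1).2 hsum_geo
  have h1 : |∑' i, a (i + 1)| ≤ ∑' i, |a (i + 1)| := by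
    simpa [Real.norm_eq_abs] using
      norm_tsum_le_tsum_norm (f := fun i => a (i + 1))
        (by simpa [Real.norm_eq_abs] using hsum_abs')
  have h2 : (∑' i, |a (i + 1)|) ≤ ∑' i : ℕ, (1 / d) * r ^ (i + 1) :=
    Summable.tsum_le_tsum (fun i => habs (i + 1)) hsum_abs' hsum_geo'
  have h3 : (∑' i : ℕ, (1 / d) * r ^ (i + 1)) = (1 / d) * r * (1 - r)⁻¹ := by
    have : (fun i : ℕ => (1 / d) * r ^ (i + 1)) = fun i : ℕ => (1 / d) * r * r ^ i := by
      funext i; ring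
    rw [this, tsum_mul_left, tsum_geometric_of_lt_one hr0 hr1]
  have h4 : (1 / d) * r * (1 - r)⁻¹ ≤ (1 / 5) * (1 / d) := by
    have h1r : (0 : ℝ) < 1 - r := by linarith
    have hinv : (1 - r)⁻¹ ≤ (5 / 6 : ℝ)⁻¹ := by
      apply inv_anti₀ (by norm_num)
      linarith
    have hd1 : (0 : ℝ) < 1 / d := by positivity
    calc (1 / d) * r * (1 - r)⁻¹ ≤ (1 / d) * (1 / 6) * (5 / 6 : ℝ)⁻¹ := by
          apply mul_le_mul _ hinv (by positivity) (by positivity)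
          apply mul_le_mul_of_nonneg_left hr6.le hd1.le
      _ = (1 / 5) * (1 / d) := by ring
  linarith


/-- `zh = (z, z₋₁, z₋₂, …)` is a prehistory in `Λ`: a sequence of consecutive
`f`-preimages all lying in `Λ`. -/
def IsPrehistory (Λ : Set (ℝ × ℝ)) (f : ℝ × ℝ → ℝ × ℝ) (zh : ℕ → ℝ × ℝ) : Prop :=
  (∀ n, zh n ∈ Λ) ∧ ∀ n, f (zh (n + 1)) = zh n

/-- The shift `f̂` on prehistories: `f̂ (z, z₋₁, …) = (f z, z, z₋₁, …)`. -/
def shiftPre (f : ℝ × ℝ → ℝ × ℝ) (zh : ℕ → ℝ × ℝ) : ℕ → ℝ × ℝ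
  | 0 => f (zh 0)
  | n + 1 => zh n

/-- assuming the series formula
`ω(ẑ) = ∂_x h(z₋₁)/g'(x₋₁) + Σ_{i≥2} ∂_x h(z₋ᵢ)·∂_y h(z₋ᵢ₊₁)⋯∂_y h(z₋₁)/(g'(x₋₁)⋯g'(x₋ᵢ))`,
if `ẑ, ẑ'` are prehistories of the same point with `z₋₁ ≠ z₋₁'`,
`∂_x h(z₋₁) = 1`, `∂_x h(z₋₁') = -1`, `β < g' < β²`, `|∂_x h| ≤ 1`, `|∂_y h| ≤ δ < 1`,
and `(1/β²)·1/(1-δ/β) < 1.2/β²`, then `|ω(ẑ) - ω(ẑ')| > 0.7/β²`. -/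
theorem unstable_slopes_differ
    (Λ : Set (ℝ × ℝ)) (g gd : ℝ → ℝ) (h hx hy : ℝ × ℝ → ℝ)
    (f : ℝ × ℝ → ℝ × ℝ) (hf : ∀ z, f z = (g z.1, h z))
    (β δ : ℝ) (hβ : 1 < β) (hδ0 : 0 ≤ δ) (hδ1 : δ < 1)
    (hβδ : 1 / β ^ 2 * (1 / (1 - δ / β)) < 1.2 / β ^ 2)
    (hgd : ∀ z ∈ Λ, β < gd z.1 ∧ gd z.1 < β ^ 2)
    (hhx : ∀ z ∈ Λ, |hx z| ≤ 1)
    (hhy : ∀ z ∈ Λ, |hy z| ≤ δ)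
    (ω : (ℕ → ℝ × ℝ) → ℝ)
    (hseries : ∀ zh, IsPrehistory Λ f zh →
      ω zh = ∑' i : ℕ,
        hx (zh (i + 1)) * (∏ j ∈ Finset.range i, hy (zh (j + 1))) /
          ∏ j ∈ Finset.range (i + 1), gd ((zh (j + 1)).1))
    (zh zh' : ℕ → ℝ × ℝ)
    (hzh : IsPrehistory Λ f zh) (hzh' : IsPrehistory Λ f zh')
    (hsame : zh 0 = zh' 0) (hdiff : zh 1 ≠ zh' 1)
    (hx1 : hx (zh 1) = 1) (hx1' : hx (zh' 1) = -1) :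
    0.7 / β ^ 2 < |ω zh - ω zh'| := by
  have hβ0 : (0 : ℝ) < β := by linarith
  have hb2 : (0 : ℝ) < β ^ 2 := by positivity
  -- extract δ/β < 1/6 from hβδ
  have hδβ1 : δ / β < 1 := by
    rw [div_lt_one hβ0]; linarith
  have h1r : (0 : ℝ) < 1 - δ / β := by linarith
  have h12 : 1 / (1 - δ / β) < 1.2 := by
    have hb2' : (0 : ℝ) < 1 / β ^ 2 := by positivity
    have : 1 / β ^ 2 * (1 / (1 - δ / β)) < 1 / β ^ 2 * 1.2 := by
      calc 1 / β ^ 2 * (1 / (1 - δ / β)) < 1.2 / β ^ 2 := hβδ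
        _ = 1 / β ^ 2 * 1.2 := by ring
    exact (mul_lt_mul_iff_right₀ hb2').mp this
  have hr6 : δ / β < 1 / 6 := by
    rw [div_lt_iff₀ h1r] at h12
    nlinarith
  -- apply the auxiliary lemma to both prehistories
  have hA := omega_head_approx Λ gd hx hy β δ hβ hδ0 hr6 hgd hhx hhy zh hzh.1
  have hB := omega_head_approx Λ gd hx hy β δ hβ hδ0 hr6 hgd hhx hhy zh' hzh'.1
  rw [← hseries zh hzh, hx1] at hA
  rw [← hseries zh' hzh', hx1'] at hB
  set d : ℝ := gd ((zh 1).1) with hd_def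
  set d' : ℝ := gd ((zh' 1).1) with hd'_def
  have hdβ : β < d := (hgd _ (hzh.1 1)).1
  have hdβ2 : d < β ^ 2 := (hgd _ (hzh.1 1)).2
  have hd'β : β < d' := (hgd _ (hzh'.1 1)).1
  have hd'β2 : d' < β ^ 2 := (hgd _ (hzh'.1 1)).2
  have hd0 : 0 < d := by linarith
  have hd'0 : 0 < d' := by linarith
  rw [abs_le] at hA hB
  obtain ⟨hA1, hA2⟩ := hA
  obtain ⟨hB1, hB2⟩ := hB
  -- 1/β² < 1/d and 1/β² < 1/d'
  have hinvd : 1 / β ^ 2 < 1 / d := by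
    apply one_div_lt_one_div_of_lt hd0 hdβ2
  have hinvd' : 1 / β ^ 2 < 1 / d' := by
    apply one_div_lt_one_div_of_lt hd'0 hd'β2
  -- ω zh > (4/5)/β² and ω zh' < -(4/5)/β²
  have hωzh : (4 / 5) * (1 / β ^ 2) < ω zh := by
    have : ω zh ≥ (4 / 5) * (1 / d) := by
      have : -((1 / 5) * (1 / d)) ≤ ω zh - 1 / d := hA1
      linarith
    calc (4 / 5) * (1 / β ^ 2) < (4 / 5) * (1 / d) := by linarith
      _ ≤ ω zh := this
  have hωzh' : ω zh' < -((4 / 5) * (1 / β ^ 2)) := by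
    have : ω zh' ≤ -((4 / 5) * (1 / d')) := by
      have : ω zh' - (-1) / d' ≤ (1 / 5) * (1 / d') := hB2
      have hneg : (-1) / d' = -(1 / d') := by ring
      rw [hneg] at this
      linarith
    calc ω zh' ≤ -((4 / 5) * (1 / d')) := this
      _ < -((4 / 5) * (1 / β ^ 2)) := by linarith
  have hdiff2 : 0.7 / β ^ 2 < ω zh - ω zh' := by
    have h07 : (0.7 : ℝ) / β ^ 2 ≤ (8 / 5) * (1 / β ^ 2) := by
      rw [div_le_iff₀ hb2]
      have : (8 / 5 : ℝ) * (1 / β ^ 2) * β ^ 2 = 8 / 5 := by field_simp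
      rw [this]; norm_num
    linarith
  exact lt_of_lt_of_le hdiff2 (le_abs_self _)
end
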